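/- Let n ≥ 2 and let σ : ℤ → ℤ be an n-periodic bijection that is balanced (Σ_{i=1}^n σ(i) = n(n+1)/2) and whose length ℓ(σ) = Σ_{1 ≤ i < j ≤ n} |⌊(σ(j)-σ(i))/n⌋| is minimal among all balanced n-periodic bijections agreeing with σ mod n. Then |σ(i) − i| < n for every i ∈ {1,...,n}. -/

import Mathlib

open Finset

/-- Shi length statistic of an n-periodic bijection. -/
noncomputable def affineLength (n : ℤ) (σ : ℤ → ℤ) : ℤ :=
  ∑ i ∈ Finset.Icc (1 : ℤ) n, ∑ j ∈ Finset.Icc (1 : ℤ) n,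
    if i < j then |Int.fdiv (σ j - σ i) n| else 0

namespace AffAux

variable {n : ℤ}

lemma fdiv_add_mul (hn : 0 < n) (m e : ℤ) : (m + e * n).fdiv n = m.fdiv n + e := by
  rw [Int.fdiv_eq_ediv_of_nonneg _ hn.le, Int.fdiv_eq_ediv_of_nonneg _ hn.le, Int.add_mul_ediv_right _ _ hn.ne']

lemma fdiv_neg1 (hn : 0 < n) {m : ℤ} (h : m < 0) : m.fdiv n ≤ -1 := by
  rw [Int.fdiv_eq_ediv_of_nonneg _ hn.le]; have := Int.ediv_neg_of_neg_of_pos h hn; omega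

lemma fdiv_ge (hn : 0 < n) {c m : ℤ} (h : c * n ≤ m) : c ≤ m.fdiv n := by
  rw [Int.fdiv_eq_ediv_of_nonneg _ hn.le]; exact (Int.le_ediv_iff_mul_le hn).2 h

lemma fdiv_le_neg2 (hn : 0 < n) {m : ℤ} (h : m ≤ -n - 1) : m.fdiv n ≤ -2 := by
  rw [Int.fdiv_eq_ediv_of_nonneg _ hn.le]
  have : m / n < -1 := (Int.ediv_lt_iff_lt_mul hn).2 (by omega)
  omega

lemma abs_p1_le (F : ℤ) : |F + 1| - |F| ≤ 1 := by
  have h := abs_add_le F 1; rw [abs_one] at h; linarith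

lemma abs_m1_le (F : ℤ) : |F + (-1)| - |F| ≤ 1 := by
  have h := abs_add_le F (-1); rw [abs_neg, abs_one] at h; linarith

lemma abs_eval_p1 {F : ℤ} (h : F ≤ -1) : |F + 1| - |F| = -1 := by
  rw [abs_of_nonpos (by omega : F + 1 ≤ 0), abs_of_nonpos (by omega : F ≤ 0)]; ring

lemma abs_eval_m1 {F : ℤ} (h : 1 ≤ F) : |F + (-1)| - |F| = -1 := by
  rw [abs_of_nonneg (by omega : (0:ℤ) ≤ F + (-1)), abs_of_nonneg (by omega : (0:ℤ) ≤ F)]; ring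

lemma abs_eval_p2 {F : ℤ} (h : F ≤ -2) : |F + 2| - |F| = -2 := by
  rw [abs_of_nonpos (by omega : F + 2 ≤ 0), abs_of_nonpos (by omega : F ≤ 0)]; ring

lemma abs_eval_m2 {F : ℤ} (h : 2 ≤ F) : |F + (-2)| - |F| = -2 := by
  rw [abs_of_nonneg (by omega : (0:ℤ) ≤ F + (-2)), abs_of_nonneg (by omega : (0:ℤ) ≤ F)]; ring

lemma per_mul {σ : ℤ → ℤ} (hper : ∀ i : ℤ, σ (i + n) = σ i + n) :
    ∀ (x k : ℤ), σ (x + n * k) = σ x + n * k := by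
  intro x k
  induction k using Int.induction_on with
  | zero => simp
  | succ m ih =>
      have h1 : x + n * ((m : ℤ) + 1) = (x + n * m) + n := by ring
      rw [h1, hper, ih]; ring
  | pred m ih =>
      have e : x + n * (-(m : ℤ) - 1) + n = x + n * (-(m : ℤ)) := by ring
      have h2 := hper (x + n * (-(m : ℤ) - 1))
      rw [e] at h2
      have h3 : σ (x + n * (-(m : ℤ) - 1)) = σ x + n * (-(m : ℤ)) - n := by linarith
      rw [h3]; ring

lemma resid_ne {σ : ℤ → ℤ} (hbij : Function.Bijective σ)
    (hper : ∀ i : ℤ, σ (i + n) = σ i + n)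
    {u v : ℤ} (h : ¬ n ∣ u - v) : ¬ n ∣ σ u - σ v := by
  rintro ⟨k, hk⟩
  have h1 : σ u = σ (v + n * k) := by rw [per_mul hper]; linarith
  have h2 := hbij.injective h1
  exact h ⟨k, by omega⟩

lemma emod_inj (hn : 0 < n) {p q : ℤ} (hp1 : 1 ≤ p) (hpn : p ≤ n) (hq1 : 1 ≤ q) (hqn : q ≤ n)
    (h : p % n = q % n) : p = q := by
  have hd : n ∣ p - q :=
    Int.dvd_of_emod_eq_zero (Int.emod_eq_emod_iff_emod_sub_eq_zero.mp h)
  have h0 : p - q = 0 := Int.eq_zero_of_abs_lt_dvd hd (abs_lt.mpr ⟨by omega, by omega⟩)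
  omega

lemma unit_interval_mul {d : ℤ} (hn : 0 < n) (h1 : 0 < n * d) (h2 : n * d < n) : False := by
  rcases le_or_gt d 0 with h | h
  · nlinarith
  · nlinarith

lemma zero_or_one_mul {d : ℤ} (hn : 0 < n) (h1 : -n < n * d) (h2 : n * d < 2 * n) :
    d = 0 ∨ d = 1 := by
  rcases lt_trichotomy d 0 with h | h | h
  · exfalso; nlinarith
  · left; exact h
  · have : d < 2 := by nlinarith
    right; omega



lemma sum_lb (a : ℤ) : ∀ (S : Finset ℤ), (∀ s ∈ S, a ≤ s) →
    ∑ x ∈ Icc a (a + S.card - 1), x ≤ ∑ x ∈ S, x := by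
  intro S
  induction S using Finset.induction_on_max with
  | empty =>
      intro _
      rw [show (a + ((∅ : Finset ℤ).card : ℤ) - 1) = a - 1 by simp,
        Finset.Icc_eq_empty (by omega)]
  | insert b S hb ih =>
      intro h
      have hbS : b ∉ S := fun hm => absurd (hb b hm) (lt_irrefl b)
      have hS : ∀ s ∈ S, a ≤ s := fun s hs => h s (Finset.mem_insert_of_mem hs)
      have hab : a ≤ b := h b (Finset.mem_insert_self b S)
      have hsub : S ⊆ Icc a (b - 1) := fun s hs =>
        Finset.mem_Icc.mpr ⟨hS s hs, by have := hb s hs; omega⟩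
      have hc2 : (S.card : ℤ) ≤ b - a := by
        have h1 := Finset.card_le_card hsub
        rw [Int.card_Icc] at h1
        omega
      rw [Finset.card_insert_of_notMem hbS]
      have e0 : (a + ((S.card + 1 : ℕ) : ℤ) - 1) = a + (S.card : ℤ) := by push_cast; ring
      rw [e0]
      have e1 : Icc a (a + (S.card : ℤ)) =
          insert (a + (S.card : ℤ)) (Icc a (a + (S.card : ℤ) - 1)) := by
        ext z; simp only [Finset.mem_Icc, Finset.mem_insert]; omega
      rw [e1, Finset.sum_insert (by simp only [Finset.mem_Icc]; omega),
        Finset.sum_insert hbS]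
      have h2 := ih hS
      linarith

lemma sum_ub (a : ℤ) : ∀ (S : Finset ℤ), (∀ s ∈ S, s ≤ a) →
    ∑ x ∈ S, x ≤ ∑ x ∈ Icc (a - S.card + 1) a, x := by
  intro S
  induction S using Finset.induction_on_min with
  | empty =>
      intro _
      rw [show (a - ((∅ : Finset ℤ).card : ℤ) + 1) = a + 1 by simp,
        Finset.Icc_eq_empty (by omega)]
  | insert b S hb ih =>
      intro h
      have hbS : b ∉ S := fun hm => absurd (hb b hm) (lt_irrefl b)
      have hS : ∀ s ∈ S, s ≤ a := fun s hs => h s (Finset.mem_insert_of_mem hs)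
      have hab : b ≤ a := h b (Finset.mem_insert_self b S)
      have hsub : S ⊆ Icc (b + 1) a := fun s hs =>
        Finset.mem_Icc.mpr ⟨by have := hb s hs; omega, hS s hs⟩
      have hc2 : (S.card : ℤ) ≤ a - b := by
        have h1 := Finset.card_le_card hsub
        rw [Int.card_Icc] at h1
        omega
      rw [Finset.card_insert_of_notMem hbS]
      have e0 : (a - ((S.card + 1 : ℕ) : ℤ) + 1) = a - (S.card : ℤ) := by push_cast; ring
      rw [e0]
      have e1 : Icc (a - (S.card : ℤ)) a =
          insert (a - (S.card : ℤ)) (Icc (a - (S.card : ℤ) + 1) a) := by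
        ext z; simp only [Finset.mem_Icc, Finset.mem_insert]; omega
      rw [Finset.sum_insert hbS, e1,
        Finset.sum_insert (by simp only [Finset.mem_Icc]; omega)]
      have h2 := ih hS
      linarith

lemma window_bal {n : ℤ} {σ : ℤ → ℤ} (hn : 0 < n)
    (hper : ∀ i : ℤ, σ (i + n) = σ i + n)
    (hbal : ∑ x ∈ Icc (1:ℤ) n, σ x = ∑ x ∈ Icc (1:ℤ) n, x) :
    ∀ a : ℤ, ∑ x ∈ Icc (a+1) (a+n), σ x = ∑ x ∈ Icc (a+1) (a+n), x := by
  have step : ∀ (f : ℤ → ℤ), (∀ i, f (i + n) = f i + n) → ∀ a : ℤ,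
      ∑ x ∈ Icc (a+2) (a+1+n), f x = ∑ x ∈ Icc (a+1) (a+n), f x + n := by
    intro f hf a
    have e1 : Icc (a+1) (a+n) = insert (a+1) (Icc (a+2) (a+n)) := by
      ext z; simp only [Finset.mem_Icc, Finset.mem_insert]; omega
    have e2 : Icc (a+2) (a+1+n) = insert (a+1+n) (Icc (a+2) (a+n)) := by
      ext z; simp only [Finset.mem_Icc, Finset.mem_insert]; omega
    rw [e1, e2, Finset.sum_insert (by simp only [Finset.mem_Icc]; omega),
      Finset.sum_insert (by simp only [Finset.mem_Icc]; omega)]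
    have h1 : f (a+1+n) = f (a+1) + n := by
      rw [show a+1+n = (a+1)+n by ring, hf]
    rw [h1]; ring
  intro a
  induction a using Int.induction_on with
  | zero => simpa using hbal
  | succ m ih =>
      have h1 := step σ hper m
      have h2 := step (fun x => x) (fun i => rfl) m
      rw [show ((m:ℤ)+1+1) = (m:ℤ)+2 by ring]
      linarith
  | pred m ih =>
      have h1 := step σ hper (-(m:ℤ)-1)
      have h2 := step (fun x => x) (fun i => rfl) (-(m:ℤ)-1)
      rw [show (-(m:ℤ)-1+2) = -(m:ℤ)+1 by ring, show (-(m:ℤ)-1+1+n) = -(m:ℤ)+n by ring] at h1 h2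
      linarith


lemma key_move (n : ℤ) (hn : 2 ≤ n) (σ : ℤ → ℤ)
    (hbij : Function.Bijective σ) (hper : ∀ i : ℤ, σ (i + n) = σ i + n)
    (hbal : ∑ i ∈ Finset.Icc (1 : ℤ) n, σ i = ∑ i ∈ Finset.Icc (1 : ℤ) n, i)
    (hmin : ∀ σ' : ℤ → ℤ, Function.Bijective σ' → (∀ i : ℤ, σ' (i + n) = σ' i + n) →
      (∑ i ∈ Finset.Icc (1 : ℤ) n, σ' i = ∑ i ∈ Finset.Icc (1 : ℤ) n, i) →
      (∀ i : ℤ, σ' i ≡ σ i [ZMOD n]) → affineLength n σ ≤ affineLength n σ')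
    {x y : ℤ} (hxy : x < y) (hyx : y < x + n) : σ x - n < σ y := by
  by_contra hcon
  push_neg at hcon
  have hn0 : 0 < n := by omega
  set I : ℤ := (x - 1) % n + 1 with hIdef
  set J : ℤ := (y - 1) % n + 1 with hJdef
  have hImem : 1 ≤ I ∧ I ≤ n := by
    have h1 := Int.emod_nonneg (x-1) hn0.ne'
    have h2 := Int.emod_lt_of_pos (x-1) hn0
    omega
  have hJmem : 1 ≤ J ∧ J ≤ n := by
    have h1 := Int.emod_nonneg (y-1) hn0.ne'
    have h2 := Int.emod_lt_of_pos (y-1) hn0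
    omega
  obtain ⟨k1, hk1⟩ : ∃ k, x = I + n * k :=
    ⟨(x-1)/n, by have := Int.emod_add_mul_ediv (x-1) n; rw [hIdef]; linarith⟩
  obtain ⟨k2, hk2⟩ : ∃ k, y = J + n * k :=
    ⟨(y-1)/n, by have := Int.emod_add_mul_ediv (y-1) n; rw [hJdef]; linarith⟩
  have hsx : σ x = σ I + n * k1 := by rw [hk1, per_mul hper]
  have hsy : σ y = σ J + n * k2 := by rw [hk2, per_mul hper]
  obtain ⟨d, hd1, hd2⟩ : ∃ d, y - x = (J - I) + n * d ∧ σ J - σ I = (σ y - σ x) - n * d :=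
    ⟨k2 - k1, ⟨by rw [hk1, hk2]; ring, by rw [hsx, hsy]; ring⟩⟩
  have hndvd : ¬ n ∣ y - x := by
    rintro ⟨c, hc⟩
    exact unit_interval_mul hn0 (by linarith : 0 < n * c) (by linarith : n * c < n)
  have hIJ : I ≠ J := by
    intro h
    rw [h] at hd1
    exact hndvd ⟨d, by linarith⟩
  have hsdvd : ¬ n ∣ σ y - σ x := resid_ne hbij hper hndvd
  have hstrict : σ y ≤ σ x - n - 1 := by
    have : σ y - σ x ≠ -n := fun h => hsdvd ⟨-1, by rw [h]; ring⟩
    omega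
  have hd01 : d = 0 ∨ d = 1 :=
    zero_or_one_mul hn0 (by linarith) (by linarith)
  have hcase : (I < J ∧ σ J + n + 1 ≤ σ I) ∨ (J < I ∧ σ J + 2*n ≤ σ I) := by
    rcases hd01 with rfl | rfl
    · left
      constructor
      · simp only [mul_zero] at hd1; omega
      · simp only [mul_zero] at hd2; omega

    · right
      constructor
      · simp only [mul_one] at hd1; omega
      · simp only [mul_one] at hd2; omega
  classical
  set c : ℤ → ℤ := fun z => if z % n = I % n then (-1 : ℤ) else if z % n = J % n then 1 else 0
    with hcdef
  set σ' : ℤ → ℤ := fun z => σ z + n * c z with hσ'def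
  have hcper : ∀ z k : ℤ, c (z + n * k) = c z := by
    intro z k
    simp only [hcdef]
    rw [Int.add_mul_emod_self_left]
  have hcI : c I = -1 := by simp only [hcdef]; simp
  have hIJmod : I % n ≠ J % n :=
    fun h => hIJ (emod_inj hn0 hImem.1 hImem.2 hJmem.1 hJmem.2 h)
  have hcJ : c J = 1 := by
    simp only [hcdef]
    rw [if_neg (fun h => hIJmod h.symm)]; simp
  have hck0 : ∀ k, 1 ≤ k → k ≤ n → k ≠ I → k ≠ J → c k = 0 := by
    intro k h1 h2 hkI hkJ
    simp only [hcdef]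
    rw [if_neg (fun h => hkI (emod_inj hn0 h1 h2 hImem.1 hImem.2 h)),
      if_neg (fun h => hkJ (emod_inj hn0 h1 h2 hJmem.1 hJmem.2 h))]
  have hper' : ∀ i : ℤ, σ' (i + n) = σ' i + n := by
    intro z
    simp only [hσ'def]
    have hc1 : c (z + n) = c z := by rw [show z + n = z + n * 1 by ring, hcper]
    rw [hper z, hc1]; ring
  have hbij' : Function.Bijective σ' := by
    have hrw : σ' = σ ∘ (fun z => z + n * c z) := by
      funext z
      simp only [hσ'def, Function.comp_apply]
      rw [per_mul hper]
    rw [hrw]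
    apply hbij.comp
    apply Function.bijective_iff_has_inverse.mpr
    refine ⟨fun z => z - n * c z, fun z => ?_, fun z => ?_⟩
    · simp only
      rw [hcper]; ring
    · simp only
      have hc2 : c (z - n * c z) = c z := by
        rw [show z - n * c z = z + n * (-(c z)) by ring, hcper]
      rw [hc2]; ring
  have hbal' : ∑ i ∈ Finset.Icc (1:ℤ) n, σ' i = ∑ i ∈ Finset.Icc (1:ℤ) n, i := by
    simp only [hσ'def]
    rw [Finset.sum_add_distrib]
    have hIs : I ∈ Finset.Icc (1:ℤ) n := Finset.mem_Icc.mpr ⟨hImem.1, hImem.2⟩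
    have hJs' : J ∈ (Finset.Icc (1:ℤ) n).erase I :=
      Finset.mem_erase.mpr ⟨Ne.symm hIJ, Finset.mem_Icc.mpr ⟨hJmem.1, hJmem.2⟩⟩
    have hz : ∑ i ∈ Finset.Icc (1:ℤ) n, n * c i = 0 := by
      rw [← Finset.add_sum_erase _ _ hIs, ← Finset.add_sum_erase _ _ hJs']
      have hrest : ∑ i ∈ (((Finset.Icc (1:ℤ) n).erase I).erase J), n * c i = 0 := by
        apply Finset.sum_eq_zero
        intro k hk
        have h1 := Finset.mem_erase.mp hk
        have h2 := Finset.mem_erase.mp h1.2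
        have hks := Finset.mem_Icc.mp h2.2
        rw [hck0 k hks.1 hks.2 h2.1 h1.1]; ring
      rw [hrest, hcI, hcJ]; ring
    rw [hbal, hz, add_zero]
  have hcong : ∀ z : ℤ, σ' z ≡ σ z [ZMOD n] := by
    intro z
    show (σ z + n * c z) % n = σ z % n
    exact Int.add_mul_emod_self_left _ _ _
  have hML := hmin σ' hbij' hper' hbal' hcong
  -- setup for length computation
  have hIs : I ∈ Finset.Icc (1:ℤ) n := Finset.mem_Icc.mpr ⟨hImem.1, hImem.2⟩
  have hJs : J ∈ Finset.Icc (1:ℤ) n := Finset.mem_Icc.mpr ⟨hJmem.1, hJmem.2⟩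
  set s : Finset ℤ := Finset.Icc (1:ℤ) n with hsdef
  set t : Finset ℤ := (s.erase I).erase J with htdef
  set e : ℤ → ℤ := fun p => if p = I then (-1:ℤ) else if p = J then 1 else 0 with hedef
  have heI : e I = -1 := by simp only [hedef]; simp
  have heJ : e J = 1 := by
    simp only [hedef]
    rw [if_neg (Ne.symm hIJ)]; simp
  have hek : ∀ k, k ≠ I → k ≠ J → e k = 0 := by
    intro k h1 h2; simp only [hedef]; rw [if_neg h1, if_neg h2]
  have hce : ∀ p, p ∈ s → c p = e p := by
    intro p hp
    rw [hsdef, Finset.mem_Icc] at hp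
    by_cases h1 : p = I
    · rw [h1, hcI, heI]
    · by_cases h2 : p = J
      · rw [h2, hcJ, heJ]
      · rw [hck0 p hp.1 hp.2 h1 h2, hek p h1 h2]
  set T : ℤ → ℤ → ℤ := fun p q => if p < q then |(σ q - σ p).fdiv n| else 0 with hTdef
  set T' : ℤ → ℤ → ℤ := fun p q => if p < q then |(σ q - σ p).fdiv n + (e q - e p)| else 0
    with hT'def
  have hLσ : affineLength n σ = ∑ p ∈ s, ∑ q ∈ s, T p q := rfl
  have hLσ' : affineLength n σ' = ∑ p ∈ s, ∑ q ∈ s, T' p q := by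
    show (∑ p ∈ s, ∑ q ∈ s, if p < q then |(σ' q - σ' p).fdiv n| else 0)
        = ∑ p ∈ s, ∑ q ∈ s, T' p q
    apply Finset.sum_congr rfl; intro p hp
    apply Finset.sum_congr rfl; intro q hq
    simp only [hT'def]
    by_cases hpq : p < q
    · rw [if_pos hpq, if_pos hpq]
      have harg : σ' q - σ' p = (σ q - σ p) + (e q - e p) * n := by
        simp only [hσ'def]
        rw [hce q hq, hce p hp]; ring
      rw [harg, fdiv_add_mul hn0]
    · rw [if_neg hpq, if_neg hpq]
  set D : ℤ → ℤ → ℤ := fun p q => T' p q - T p q with hDdef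
  have hDzero : ∀ p q : ℤ, ¬ p < q → D p q = 0 := by
    intro p q h; simp only [hDdef, hTdef, hT'def]; rw [if_neg h, if_neg h]; ring
  have hDeval : ∀ p q w : ℤ, p < q → e q - e p = w →
      D p q = |(σ q - σ p).fdiv n + w| - |(σ q - σ p).fdiv n| := by
    intro p q w h hw; simp only [hDdef, hTdef, hT'def]; rw [if_pos h, if_pos h, hw]
  have hD00 : ∀ p q : ℤ, p ≠ I → p ≠ J → q ≠ I → q ≠ J → D p q = 0 := by
    intro p q hpI hpJ hqI hqJ
    by_cases h : p < q
    · rw [hDeval p q 0 h (by rw [hek q hqI hqJ, hek p hpI hpJ]; ring)]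
      simp
    · exact hDzero p q h
  have hJs' : J ∈ s.erase I := Finset.mem_erase.mpr ⟨Ne.symm hIJ, hJs⟩
  have hsplit : ∀ g : ℤ → ℤ, ∑ p ∈ s, g p = g I + (g J + ∑ p ∈ t, g p) := by
    intro g
    rw [htdef, ← Finset.add_sum_erase _ g hIs, ← Finset.add_sum_erase _ g hJs']
  have htmem : ∀ k ∈ t, (1 ≤ k ∧ k ≤ n) ∧ k ≠ I ∧ k ≠ J := by
    intro k hk
    rw [htdef] at hk
    have h1 := Finset.mem_erase.mp hk
    have h2 := Finset.mem_erase.mp h1.2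
    rw [hsdef] at h2
    exact ⟨Finset.mem_Icc.mp h2.2, h2.1, h1.1⟩
  have hclass : ∀ k ∈ t, D I k + D J k + (D k I + D k J) ≤ 0 := by
    intro k hk
    obtain ⟨⟨hk1, hkn⟩, hkI, hkJ⟩ := htmem k hk
    rcases hcase with ⟨hij, hval⟩ | ⟨hji, hval⟩
    · rcases lt_or_gt_of_ne hkI with hpos | hpos
      · -- k < I < J
        have hkJ' : k < J := by omega
        have z1 : D I k = 0 := hDzero _ _ (by omega)
        have z2 : D J k = 0 := hDzero _ _ (by omega)
        have a1 : D k I = |(σ I - σ k).fdiv n + (-1)| - |(σ I - σ k).fdiv n| :=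
          hDeval k I (-1) hpos (by rw [heI, hek k hkI hkJ]; ring)
        have a2 : D k J = |(σ J - σ k).fdiv n + 1| - |(σ J - σ k).fdiv n| :=
          hDeval k J 1 hkJ' (by rw [heJ, hek k hkI hkJ]; ring)
        rcases le_or_gt n (σ I - σ k) with hc1 | hc1
        · have hu : D k I = -1 := by
            rw [a1]; exact abs_eval_m1 (fdiv_ge hn0 (by linarith : 1 * n ≤ σ I - σ k))
          have hv : D k J ≤ 1 := by rw [a2]; exact abs_p1_le _
          linarith [z1, z2, hu, hv]
        · have hv : D k J = -1 := by
            rw [a2]; exact abs_eval_p1 (fdiv_neg1 hn0 (by linarith : σ J - σ k < 0))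
          have hu : D k I ≤ 1 := by rw [a1]; exact abs_m1_le _
          linarith [z1, z2, hu, hv]
      · rcases lt_or_gt_of_ne hkJ with hpos2 | hpos2
        · -- I < k < J
          have z1 : D k I = 0 := hDzero _ _ (by omega)
          have z2 : D J k = 0 := hDzero _ _ (by omega)
          have a1 : D I k = |(σ k - σ I).fdiv n + 1| - |(σ k - σ I).fdiv n| :=
            hDeval I k 1 hpos (by rw [heI, hek k hkI hkJ]; ring)
          have a2 : D k J = |(σ J - σ k).fdiv n + 1| - |(σ J - σ k).fdiv n| :=
            hDeval k J 1 hpos2 (by rw [heJ, hek k hkI hkJ]; ring)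
          rcases lt_or_ge (σ k) (σ I) with hc1 | hc1
          · have hu : D I k = -1 := by
              rw [a1]; exact abs_eval_p1 (fdiv_neg1 hn0 (by linarith))
            have hv : D k J ≤ 1 := by rw [a2]; exact abs_p1_le _
            linarith [z1, z2, hu, hv]
          · have hv : D k J = -1 := by
              rw [a2]; exact abs_eval_p1 (fdiv_neg1 hn0 (by linarith))
            have hu : D I k ≤ 1 := by rw [a1]; exact abs_p1_le _
            linarith [z1, z2, hu, hv]
        · -- I < J < k
          have z1 : D k I = 0 := hDzero _ _ (by omega)
          have z2 : D k J = 0 := hDzero _ _ (by omega)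
          have a1 : D I k = |(σ k - σ I).fdiv n + 1| - |(σ k - σ I).fdiv n| :=
            hDeval I k 1 hpos (by rw [heI, hek k hkI hkJ]; ring)
          have a2 : D J k = |(σ k - σ J).fdiv n + (-1)| - |(σ k - σ J).fdiv n| :=
            hDeval J k (-1) hpos2 (by rw [heJ, hek k hkI hkJ]; ring)
          rcases lt_or_ge (σ k) (σ I) with hc1 | hc1
          · have hu : D I k = -1 := by
              rw [a1]; exact abs_eval_p1 (fdiv_neg1 hn0 (by linarith))
            have hv : D J k ≤ 1 := by rw [a2]; exact abs_m1_le _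
            linarith [z1, z2, hu, hv]
          · have hv : D J k = -1 := by
              rw [a2]; exact abs_eval_m1 (fdiv_ge hn0 (by linarith : 1 * n ≤ σ k - σ J))
            have hu : D I k ≤ 1 := by rw [a1]; exact abs_p1_le _
            linarith [z1, z2, hu, hv]
    · rcases lt_or_gt_of_ne hkJ with hpos | hpos
      · -- k < J < I
        have hkI' : k < I := by omega
        have z1 : D I k = 0 := hDzero _ _ (by omega)
        have z2 : D J k = 0 := hDzero _ _ (by omega)
        have a1 : D k I = |(σ I - σ k).fdiv n + (-1)| - |(σ I - σ k).fdiv n| :=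
          hDeval k I (-1) hkI' (by rw [heI, hek k hkI hkJ]; ring)
        have a2 : D k J = |(σ J - σ k).fdiv n + 1| - |(σ J - σ k).fdiv n| :=
          hDeval k J 1 hpos (by rw [heJ, hek k hkI hkJ]; ring)
        rcases le_or_gt n (σ I - σ k) with hc1 | hc1
        · have hu : D k I = -1 := by
            rw [a1]; exact abs_eval_m1 (fdiv_ge hn0 (by linarith : 1 * n ≤ σ I - σ k))
          have hv : D k J ≤ 1 := by rw [a2]; exact abs_p1_le _
          linarith [z1, z2, hu, hv]
        · have hv : D k J = -1 := by
            rw [a2]; exact abs_eval_p1 (fdiv_neg1 hn0 (by linarith))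
          have hu : D k I ≤ 1 := by rw [a1]; exact abs_m1_le _
          linarith [z1, z2, hu, hv]
      · rcases lt_or_gt_of_ne hkI with hpos2 | hpos2
        · -- J < k < I
          have z1 : D I k = 0 := hDzero _ _ (by omega)
          have z2 : D k J = 0 := hDzero _ _ (by omega)
          have a1 : D k I = |(σ I - σ k).fdiv n + (-1)| - |(σ I - σ k).fdiv n| :=
            hDeval k I (-1) hpos2 (by rw [heI, hek k hkI hkJ]; ring)
          have a2 : D J k = |(σ k - σ J).fdiv n + (-1)| - |(σ k - σ J).fdiv n| :=
            hDeval J k (-1) hpos (by rw [heJ, hek k hkI hkJ]; ring)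
          rcases le_or_gt n (σ I - σ k) with hc1 | hc1
          · have hu : D k I = -1 := by
              rw [a1]; exact abs_eval_m1 (fdiv_ge hn0 (by linarith : 1 * n ≤ σ I - σ k))
            have hv : D J k ≤ 1 := by rw [a2]; exact abs_m1_le _
            linarith [z1, z2, hu, hv]
          · have hv : D J k = -1 := by
              rw [a2]; exact abs_eval_m1 (fdiv_ge hn0 (by linarith : 1 * n ≤ σ k - σ J))
            have hu : D k I ≤ 1 := by rw [a1]; exact abs_m1_le _
            linarith [z1, z2, hu, hv]
        · -- J < I < k
          have z1 : D k I = 0 := hDzero _ _ (by omega)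
          have z2 : D k J = 0 := hDzero _ _ (by omega)
          have a1 : D I k = |(σ k - σ I).fdiv n + 1| - |(σ k - σ I).fdiv n| :=
            hDeval I k 1 hpos2 (by rw [heI, hek k hkI hkJ]; ring)
          have a2 : D J k = |(σ k - σ J).fdiv n + (-1)| - |(σ k - σ J).fdiv n| :=
            hDeval J k (-1) hpos (by rw [heJ, hek k hkI hkJ]; ring)
          rcases lt_or_ge (σ k) (σ I) with hc1 | hc1
          · have hu : D I k = -1 := by
              rw [a1]; exact abs_eval_p1 (fdiv_neg1 hn0 (by linarith))
            have hv : D J k ≤ 1 := by rw [a2]; exact abs_m1_le _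
            linarith [z1, z2, hu, hv]
          · have hv : D J k = -1 := by
              rw [a2]; exact abs_eval_m1 (fdiv_ge hn0 (by linarith : 1 * n ≤ σ k - σ J))
            have hu : D I k ≤ 1 := by rw [a1]; exact abs_p1_le _
            linarith [z1, z2, hu, hv]
  have hpair : D I J + D J I ≤ -2 := by
    rcases hcase with ⟨hij, hval⟩ | ⟨hji, hval⟩
    · have z1 : D J I = 0 := hDzero _ _ (by omega)
      have a1 : D I J = |(σ J - σ I).fdiv n + 2| - |(σ J - σ I).fdiv n| :=
        hDeval I J 2 hij (by rw [heI, heJ]; ring)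
      have hu : D I J = -2 := by
        rw [a1]; exact abs_eval_p2 (fdiv_le_neg2 hn0 (by linarith))
      linarith [z1, hu]
    · have z1 : D I J = 0 := hDzero _ _ (by omega)
      have a1 : D J I = |(σ I - σ J).fdiv n + (-2)| - |(σ I - σ J).fdiv n| :=
        hDeval J I (-2) hji (by rw [heI, heJ]; ring)
      have hu : D J I = -2 := by
        rw [a1]; exact abs_eval_m2 (fdiv_ge hn0 (by linarith : 2 * n ≤ σ I - σ J))
      linarith [z1, hu]
  have step1 : ∑ p ∈ s, (∑ q ∈ s, D p q)
      = (∑ q ∈ s, D I q) + ((∑ q ∈ s, D J q) + ∑ p ∈ t, (∑ q ∈ s, D p q)) :=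
    hsplit (fun p => ∑ q ∈ s, D p q)
  have step2 : ∑ q ∈ s, D I q = D I I + (D I J + ∑ q ∈ t, D I q) := hsplit (fun q => D I q)
  have step3 : ∑ q ∈ s, D J q = D J I + (D J J + ∑ q ∈ t, D J q) := hsplit (fun q => D J q)
  have step5 : ∑ p ∈ t, (∑ q ∈ s, D p q) = ∑ p ∈ t, (D p I + D p J) := by
    apply Finset.sum_congr rfl
    intro p hp
    obtain ⟨_, hpI, hpJ⟩ := htmem p hp
    rw [hsplit (fun q => D p q),
      Finset.sum_eq_zero (fun q hq => hD00 p q hpI hpJ (htmem q hq).2.1 (htmem q hq).2.2)]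
    ring
  have step6 : ∑ k ∈ t, (D I k + D J k + (D k I + D k J))
      = (∑ k ∈ t, D I k) + (∑ k ∈ t, D J k) + ∑ k ∈ t, (D k I + D k J) := by
    rw [Finset.sum_add_distrib, Finset.sum_add_distrib]
  have hb : ∑ k ∈ t, (D I k + D J k + (D k I + D k J)) ≤ 0 := Finset.sum_nonpos hclass
  rw [step6] at hb
  have hDII : D I I = 0 := hDzero _ _ (lt_irrefl I)
  have hDJJ : D J J = 0 := hDzero _ _ (lt_irrefl J)
  have hsum_add : ∑ k ∈ t, (D k I + D k J) = ∑ k ∈ t, D k I + ∑ k ∈ t, D k J :=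
    Finset.sum_add_distrib
  have htot : ∑ p ∈ s, (∑ q ∈ s, D p q) ≤ -2 := by
    rw [step1, step2, step3, step5]
    linarith [hpair, hb, hDII, hDJJ]
  have hdiff : affineLength n σ' - affineLength n σ = ∑ p ∈ s, (∑ q ∈ s, D p q) := by
    rw [hLσ, hLσ', ← Finset.sum_sub_distrib]
    apply Finset.sum_congr rfl
    intro p hp
    rw [← Finset.sum_sub_distrib]
  linarith [hML, htot, hdiff]

end AffAux

/-- A minimal balanced representative of a circular permutation moves each point
less than n: |σ(i) − i| < n for all i ∈ {1,…,n}. -/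
theorem stmt_7 (n : ℤ) (hn : 2 ≤ n) (σ : ℤ → ℤ)
    (hbij : Function.Bijective σ) (hper : ∀ i : ℤ, σ (i + n) = σ i + n)
    (hbal : ∑ i ∈ Finset.Icc (1 : ℤ) n, σ i = ∑ i ∈ Finset.Icc (1 : ℤ) n, i)
    (hmin : ∀ σ' : ℤ → ℤ, Function.Bijective σ' → (∀ i : ℤ, σ' (i + n) = σ' i + n) →
      (∑ i ∈ Finset.Icc (1 : ℤ) n, σ' i = ∑ i ∈ Finset.Icc (1 : ℤ) n, i) →
      (∀ i : ℤ, σ' i ≡ σ i [ZMOD n]) → affineLength n σ ≤ affineLength n σ')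
    (i : ℤ) (hi : 1 ≤ i) (hin : i ≤ n) :
    |σ i - i| < n := by
  have hn0 : 0 < n := by omega
  have P : ∀ x y : ℤ, x < y → y < x + n → σ x - n < σ y :=
    fun x y hxy hyx => AffAux.key_move n hn σ hbij hper hbal hmin hxy hyx
  by_contra hcon
  push_neg at hcon
  rcases abs_cases (σ i - i) with ⟨h1, _⟩ | ⟨h1, _⟩
  · -- σ i ≥ i + n
    have hbig : i + n ≤ σ i := by omega
    have hwin := AffAux.window_bal hn0 hper hbal i
    set S : Finset ℤ := (Finset.Icc (i+1) (i+n)).image σ with hSdef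
    have hScard : S.card = n.toNat := by
      rw [hSdef, Finset.card_image_of_injective _ hbij.injective, Int.card_Icc]
      omega
    have hSsum : ∑ v ∈ S, v = ∑ x ∈ Finset.Icc (i+1) (i+n), x := by
      rw [hSdef, Finset.sum_image (fun a _ b _ h => hbij.injective h)]
      exact hwin
    have hSlow : ∀ v ∈ S, i + 1 ≤ v := by
      intro v hv
      rw [hSdef, Finset.mem_image] at hv
      obtain ⟨z, hz, rfl⟩ := hv
      rw [Finset.mem_Icc] at hz
      rcases eq_or_lt_of_le hz.2 with heq | hlt
      · rw [heq, hper i]; omega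
      · have := P i z (by omega) (by omega)
        omega
    have hbmem : σ (i+n) ∈ S := by
      rw [hSdef]
      exact Finset.mem_image_of_mem σ (by rw [Finset.mem_Icc]; omega)
    have hkey := AffAux.sum_lb (i+1) (S.erase (σ (i+n)))
      (fun v hv => hSlow v (Finset.mem_of_mem_erase hv))
    have hce : (S.erase (σ (i+n))).card = n.toNat - 1 := by
      rw [Finset.card_erase_of_mem hbmem, hScard]
    rw [hce] at hkey
    rw [show (i + 1 + ((n.toNat - 1 : ℕ) : ℤ) - 1) = i + n - 1 by omega] at hkey
    have herase : σ (i+n) + ∑ v ∈ S.erase (σ (i+n)), v = ∑ v ∈ S, v :=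
      Finset.add_sum_erase S (fun v => v) hbmem
    have hsplitIcc : ∑ x ∈ Finset.Icc (i+1) (i+n),  x
        = (∑ x ∈ Finset.Icc (i+1) (i+n-1), x) + (i+n) := by
      have e1 : Finset.Icc (i+1) (i+n) = insert (i+n) (Finset.Icc (i+1) (i+n-1)) := by
        ext z; simp only [Finset.mem_Icc, Finset.mem_insert]; omega
      rw [e1, Finset.sum_insert (by simp only [Finset.mem_Icc]; omega)]
      ring
    have hpn : σ (i+n) = σ i + n := hper i
    linarith [hkey, herase, hSsum, hsplitIcc, hpn, hbig]
  · -- σ i ≤ i - n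
    have hsmall : σ i ≤ i - n := by omega
    have hwin := AffAux.window_bal hn0 hper hbal (i - n - 1)
    rw [show (i-n-1)+1 = i-n by ring, show (i-n-1)+n = i-1 by ring] at hwin
    set S : Finset ℤ := (Finset.Icc (i-n) (i-1)).image σ with hSdef
    have hScard : S.card = n.toNat := by
      rw [hSdef, Finset.card_image_of_injective _ hbij.injective, Int.card_Icc]
      omega
    have hSsum : ∑ v ∈ S, v = ∑ x ∈ Finset.Icc (i-n) (i-1), x := by
      rw [hSdef, Finset.sum_image (fun a _ b _ h => hbij.injective h)]
      exact hwin
    have hpn : σ (i - n) = σ i - n := by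
      have h2 := hper (i - n)
      rw [show i - n + n = i by ring] at h2
      omega
    have hShigh : ∀ v ∈ S, v ≤ i - 1 := by
      intro v hv
      rw [hSdef, Finset.mem_image] at hv
      obtain ⟨z, hz, rfl⟩ := hv
      rw [Finset.mem_Icc] at hz
      rcases eq_or_lt_of_le hz.1 with heq | hlt
      · rw [← heq, hpn]; omega
      · have := P z i (by omega) (by omega)
        omega
    have hbmem : σ (i-n) ∈ S := by
      rw [hSdef]
      exact Finset.mem_image_of_mem σ (by rw [Finset.mem_Icc]; omega)
    have hkey := AffAux.sum_ub (i-1) (S.erase (σ (i-n)))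
      (fun v hv => hShigh v (Finset.mem_of_mem_erase hv))
    have hce : (S.erase (σ (i-n))).card = n.toNat - 1 := by
      rw [Finset.card_erase_of_mem hbmem, hScard]
    rw [hce] at hkey
    rw [show (i - 1 - ((n.toNat - 1 : ℕ) : ℤ) + 1) = i - n + 1 by omega] at hkey
    have herase : σ (i-n) + ∑ v ∈ S.erase (σ (i-n)), v = ∑ v ∈ S, v :=
      Finset.add_sum_erase S (fun v => v) hbmem
    have hsplitIcc : ∑ x ∈ Finset.Icc (i-n) (i-1), x
        = (i-n) + (∑ x ∈ Finset.Icc (i-n+1) (i-1), x) := by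
      have e1 : Finset.Icc (i-n) (i-1) = insert (i-n) (Finset.Icc (i-n+1) (i-1)) := by
        ext z; simp only [Finset.mem_Icc, Finset.mem_insert]; omega
      rw [e1, Finset.sum_insert (by simp only [Finset.mem_Icc]; omega)]
    linarith [hkey, herase, hSsum, hsplitIcc, hpn, hsmall]
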